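/- For every integer x ≥ 1, M(x) = G⁻¹(x) + ∑_{p ≤ x, p prime} G⁻¹(⌊x/p⌋). -/

import Mathlib

open Finset ArithmeticFunction
open scoped ArithmeticFunction.zeta ArithmeticFunction.Moebius ArithmeticFunction.omega

/-- The auxiliary arithmetic function `h = ε + 1_{prime}`. -/
noncomputable def hAux : ArithmeticFunction ℝ :=
  ⟨fun n => if n = 1 then 1 else if n.Prime then 1 else 0, by simp [Nat.not_prime_zero]⟩

lemma hAux_apply (n : ℕ) : hAux n = if n = 1 then 1 else if n.Prime then 1 else 0 := rfl

/-- Summation swap (Dirichlet hyperbola, trivial version). -/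
lemma sum_mul_hyp (f h : ArithmeticFunction ℝ) (x : ℕ) :
    ∑ n ∈ Icc 1 x, (f * h) n =
      ∑ d ∈ Icc 1 x, f d * ∑ m ∈ Icc 1 (x / d), h m := by
  simp_rw [ArithmeticFunction.mul_apply, Finset.mul_sum]
  rw [Finset.sum_sigma' (Icc 1 x) (fun n => n.divisorsAntidiagonal)
      (fun n p => f p.1 * h p.2),
    Finset.sum_sigma' (Icc 1 x) (fun d => Icc 1 (x / d)) (fun d m => f d * h m)]
  refine Finset.sum_nbij' (fun p => ⟨p.2.1, p.2.2⟩) (fun q => ⟨q.1 * q.2, (q.1, q.2)⟩)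
      ?_ ?_ ?_ ?_ ?_
  · rintro ⟨n, d, m⟩ hp
    simp only [Finset.mem_sigma, Finset.mem_Icc, Nat.mem_divisorsAntidiagonal] at hp ⊢
    obtain ⟨⟨hn1, hnx⟩, hdm, hn0⟩ := hp
    have hd0 : 0 < d := by
      rcases Nat.eq_zero_or_pos d with h | h
      · subst h; simp at hdm; omega
      · exact h
    have hm0 : 0 < m := by
      rcases Nat.eq_zero_or_pos m with h | h
      · subst h; simp at hdm; omega
      · exact h
    refine ⟨⟨hd0, ?_⟩, hm0, ?_⟩
    · exact le_trans (Nat.le_of_dvd (by omega) ⟨m, hdm.symm⟩) hnx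
    · rw [Nat.le_div_iff_mul_le hd0, mul_comm, hdm]; omega
  · rintro ⟨d, m⟩ hq
    simp only [Finset.mem_sigma, Finset.mem_Icc, Nat.mem_divisorsAntidiagonal] at hq ⊢
    obtain ⟨⟨hd1, hdx⟩, hm1, hmd⟩ := hq
    have hmx : m * d ≤ x := (Nat.le_div_iff_mul_le (by omega)).mp hmd
    have hpos : 0 < d * m := Nat.mul_pos (by omega) (by omega)
    exact ⟨⟨hpos, by rw [mul_comm]; exact hmx⟩, trivial, hpos.ne'⟩
  · rintro ⟨n, d, m⟩ hp
    simp only [Finset.mem_sigma, Nat.mem_divisorsAntidiagonal] at hp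
    obtain ⟨_, hdm, _⟩ := hp
    simp [hdm]
  · rintro ⟨d, m⟩ _; rfl
  · rintro ⟨n, d, m⟩ _; rfl

lemma zeta_mul_hAux (g : ArithmeticFunction ℝ)
    (hg : ∀ n : ℕ, 0 < n → g n = (ArithmeticFunction.cardDistinctFactors n : ℝ) + 1) :
    (↑(ζ : ArithmeticFunction ℕ) : ArithmeticFunction ℝ) * hAux = g := by
  ext n
  rcases Nat.eq_zero_or_pos n with rfl | hn
  · simp
  rw [hg n hn, ArithmeticFunction.mul_apply]
  have h1 : ∀ p ∈ n.divisorsAntidiagonal,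
      (↑(ζ : ArithmeticFunction ℕ) : ArithmeticFunction ℝ) p.1 * hAux p.2 = hAux p.2 := by
    intro p hp
    have := Nat.fst_mem_divisors_of_mem_antidiagonal hp
    have hp1 : p.1 ≠ 0 := Nat.pos_of_mem_divisors this |>.ne'
    simp [natCoe_apply, ArithmeticFunction.zeta_apply, hp1]
  rw [Finset.sum_congr rfl h1]
  rw [Nat.sum_divisorsAntidiagonal' (f := fun _ y => hAux y)]
  have h2 : ∀ d ∈ n.divisors, hAux d =
      (if d = 1 then (1 : ℝ) else 0) + (if d.Prime then 1 else 0) := by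
    intro d _
    rw [hAux_apply]
    by_cases hd1 : d = 1
    · simp [hd1, Nat.not_prime_one]
    · by_cases hdp : d.Prime <;> simp [hd1, hdp]
  rw [Finset.sum_congr rfl h2, Finset.sum_add_distrib,
    Finset.sum_ite_eq' n.divisors 1 (fun _ => (1 : ℝ)),
    if_pos (Nat.one_mem_divisors.mpr hn.ne'), Finset.sum_boole,
    ← Nat.primeFactors_eq_to_filter_divisors_prime]
  have hω : (ω n : ℕ) = n.primeFactors.card := by
    rw [cardDistinctFactors_apply, Nat.primeFactors, List.card_toFinset]
  rw [hω]
  ring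

theorem stmt_13 (g ginv : ArithmeticFunction ℝ)
    (hg : ∀ n : ℕ, 0 < n → g n = (ArithmeticFunction.cardDistinctFactors n : ℝ) + 1)
    (hginv : g * ginv = 1) (x : ℕ) (hx : 1 ≤ x) :
    ((∑ n ∈ Finset.Icc 1 x, ArithmeticFunction.moebius n : ℤ) : ℝ) =
      (∑ n ∈ Finset.Icc 1 x, ginv n) +
        ∑ p ∈ (Finset.Icc 1 x).filter Nat.Prime, ∑ n ∈ Finset.Icc 1 (x / p), ginv n := by
  have hzeta := zeta_mul_hAux g hg
  have hmu : hAux * ginv = (↑(μ : ArithmeticFunction ℤ) : ArithmeticFunction ℝ) := by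
    have h1 : (↑(ζ : ArithmeticFunction ℕ) : ArithmeticFunction ℝ) * (hAux * ginv) = 1 := by
      rw [← mul_assoc, hzeta, hginv]
    calc hAux * ginv = 1 * (hAux * ginv) := (one_mul _).symm
      _ = (↑(μ : ArithmeticFunction ℤ) * ↑(ζ : ArithmeticFunction ℕ)) * (hAux * ginv) := by
          rw [coe_moebius_mul_coe_zeta]
      _ = ↑(μ : ArithmeticFunction ℤ) * ((↑(ζ : ArithmeticFunction ℕ) : ArithmeticFunction ℝ) * (hAux * ginv)) := by
          rw [mul_assoc]
      _ = ↑(μ : ArithmeticFunction ℤ) := by rw [h1, mul_one]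
  have key : ((∑ n ∈ Finset.Icc 1 x, ArithmeticFunction.moebius n : ℤ) : ℝ)
      = ∑ n ∈ Icc 1 x, (hAux * ginv) n := by
    rw [hmu]
    push_cast
    simp [intCoe_apply]
  rw [key, sum_mul_hyp]
  have split : ∀ d ∈ Icc 1 x, hAux d * (∑ m ∈ Icc 1 (x / d), ginv m) =
      (if d = 1 then ∑ m ∈ Icc 1 (x / d), ginv m else 0) +
      (if d.Prime then ∑ m ∈ Icc 1 (x / d), ginv m else 0) := by
    intro d _
    rw [hAux_apply]
    by_cases hd1 : d = 1
    · simp [hd1, Nat.not_prime_one]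
    · by_cases hdp : d.Prime <;> simp [hd1, hdp]
  rw [Finset.sum_congr rfl split, Finset.sum_add_distrib,
    Finset.sum_ite_eq' (Icc 1 x) 1 (fun d => ∑ m ∈ Icc 1 (x / d), ginv m),
    Finset.sum_filter]
  simp [Finset.mem_Icc, hx]
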